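/- Let X and Y be real Banach spaces, 1 < p ≤ ∞, and Z = X ⊕_p Y (with norm ‖(x,y)‖ = (‖x‖^p + ‖y‖^p)^{1/p} for p < ∞ and max(‖x‖,‖y‖) for p = ∞). If X* has the w*-Ball Small Combination of Slices Property (w*-BSCSP) or Y* has w*-BSCSP, then Z* has w*-BSCSP. -/

import Mathlib

open Metric Topology Pointwise ENNReal

noncomputable section

/-- The slice `S(B_X, f, α) = {x ∈ B_X : f x > 1 - α}` of the closed unit ball of `X`
determined by the functional `f` and `α`. -/
def ballSlice (X : Type*) [NormedAddCommGroup X] [NormedSpace ℝ X]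
    (f : X →L[ℝ] ℝ) (α : ℝ) : Set X :=
  {x | x ∈ closedBall (0 : X) 1 ∧ 1 - α < f x}

/-- `X` has the Ball Dentable Property: the closed unit ball has slices (determined by
norm-one functionals) of arbitrarily small diameter. -/
def BDP (X : Type*) [NormedAddCommGroup X] [NormedSpace ℝ X] : Prop :=
  ∀ ε > (0 : ℝ), ∃ f : X →L[ℝ] ℝ, ‖f‖ = 1 ∧ ∃ α > (0 : ℝ), diam (ballSlice X f α) < ε

/-- The weak topology on `X`: the coarsest topology making all continuous linear
functionals continuous. -/
def weakTop (X : Type*) [NormedAddCommGroup X] [NormedSpace ℝ X] : TopologicalSpace X :=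
  ⨅ f : X →L[ℝ] ℝ, TopologicalSpace.induced f inferInstance

/-- `X` has the Ball Huskable Property: the closed unit ball has nonempty relatively
weakly open subsets of arbitrarily small diameter. -/
def BHP (X : Type*) [NormedAddCommGroup X] [NormedSpace ℝ X] : Prop :=
  ∀ ε > (0 : ℝ), ∃ V : Set X, IsOpen[weakTop X] V ∧
    (V ∩ closedBall (0 : X) 1).Nonempty ∧ diam (V ∩ closedBall (0 : X) 1) < ε

/-- `X` has the Ball Small Combination of Slices Property: there are finite convex
combinations of slices of the closed unit ball of arbitrarily small diameter. -/
def BSCSP (X : Type*) [NormedAddCommGroup X] [NormedSpace ℝ X] : Prop :=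
  ∀ ε > (0 : ℝ), ∃ (n : ℕ) (f : Fin n → X →L[ℝ] ℝ) (α lam : Fin n → ℝ),
    (∀ i, ‖f i‖ = 1) ∧ (∀ i, 0 < α i) ∧ (∀ i, 0 ≤ lam i) ∧ (∑ i, lam i = 1) ∧
    diam (∑ i, lam i • ballSlice X (f i) (α i)) < ε

/-- The weak* ballSlice `{g ∈ B_{E*} : g e > 1 - α}` of the closed unit ball of the dual of `E`
determined by `e : E` and `α`. -/
def wstarSlice (E : Type*) [NormedAddCommGroup E] [NormedSpace ℝ E]
    (e : E) (α : ℝ) : Set (E →L[ℝ] ℝ) :=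
  {g | g ∈ closedBall (0 : E →L[ℝ] ℝ) 1 ∧ 1 - α < g e}

/-- The dual of `E` has the w*-Ball Dentable Property: the closed unit ball of `E*` has
weak* slices (determined by norm-one elements of `E`) of arbitrarily small diameter. -/
def wstarBDP (E : Type*) [NormedAddCommGroup E] [NormedSpace ℝ E] : Prop :=
  ∀ ε > (0 : ℝ), ∃ e : E, ‖e‖ = 1 ∧ ∃ α > (0 : ℝ), diam (wstarSlice E e α) < ε

/-- The weak* topology `σ(E*, E)` on the dual of `E`. -/
def wstarTop (E : Type*) [NormedAddCommGroup E] [NormedSpace ℝ E] :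
    TopologicalSpace (E →L[ℝ] ℝ) :=
  ⨅ e : E, TopologicalSpace.induced (fun g : E →L[ℝ] ℝ => g e) inferInstance

/-- The dual of `E` has the w*-Ball Huskable Property: the closed unit ball of `E*` has
nonempty relatively weak*-open subsets of arbitrarily small diameter. -/
def wstarBHP (E : Type*) [NormedAddCommGroup E] [NormedSpace ℝ E] : Prop :=
  ∀ ε > (0 : ℝ), ∃ V : Set (E →L[ℝ] ℝ), IsOpen[wstarTop E] V ∧
    (V ∩ closedBall (0 : E →L[ℝ] ℝ) 1).Nonempty ∧
    diam (V ∩ closedBall (0 : E →L[ℝ] ℝ) 1) < ε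

/-- The dual of `E` has the w*-Ball Small Combination of Slices Property: there are finite
convex combinations of weak* slices of the closed unit ball of `E*` of arbitrarily small
diameter. -/
def wstarBSCSP (E : Type*) [NormedAddCommGroup E] [NormedSpace ℝ E] : Prop :=
  ∀ ε > (0 : ℝ), ∃ (n : ℕ) (e : Fin n → E) (α lam : Fin n → ℝ),
    (∀ i, ‖e i‖ = 1) ∧ (∀ i, 0 < α i) ∧ (∀ i, 0 ≤ lam i) ∧ (∑ i, lam i = 1) ∧
    diam (∑ i, lam i • wstarSlice E (e i) (α i)) < ε

set_option linter.unusedSectionVars false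

section helpers
variable (X Y : Type*) [NormedAddCommGroup X] [NormedSpace ℝ X]
  [NormedAddCommGroup Y] [NormedSpace ℝ Y] (p : ℝ≥0∞) [Fact (1 ≤ p)]

def TX : X →L[ℝ] WithLp p (X × Y) :=
  (WithLp.prodContinuousLinearEquiv p ℝ X Y).symm.toContinuousLinearMap.comp
    (ContinuousLinearMap.inl ℝ X Y)

def QX : WithLp p (X × Y) →L[ℝ] X :=
  (ContinuousLinearMap.fst ℝ X Y).comp
    (WithLp.prodContinuousLinearEquiv p ℝ X Y).toContinuousLinearMap

def TY : Y →L[ℝ] WithLp p (X × Y) :=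
  (WithLp.prodContinuousLinearEquiv p ℝ X Y).symm.toContinuousLinearMap.comp
    (ContinuousLinearMap.inr ℝ X Y)

def QY : WithLp p (X × Y) →L[ℝ] Y :=
  (ContinuousLinearMap.snd ℝ X Y).comp
    (WithLp.prodContinuousLinearEquiv p ℝ X Y).toContinuousLinearMap

@[simp] lemma TX_apply (x : X) : TX X Y p x = (WithLp.equiv p (X × Y)).symm (x, 0) := rfl
@[simp] lemma QX_apply (z : WithLp p (X × Y)) : QX X Y p z = z.fst := rfl
@[simp] lemma TY_apply (y : Y) : TY X Y p y = (WithLp.equiv p (X × Y)).symm (0, y) := rfl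
@[simp] lemma QY_apply (z : WithLp p (X × Y)) : QY X Y p z = z.snd := rfl

lemma TX_norm (x : X) : ‖TX X Y p x‖ = ‖x‖ := by
  rw [TX_apply, WithLp.equiv_symm_apply, WithLp.norm_toLp_fst]

lemma TY_norm (y : Y) : ‖TY X Y p y‖ = ‖y‖ := by
  rw [TY_apply, WithLp.equiv_symm_apply, WithLp.norm_toLp_snd]

lemma sub_TQX (z : WithLp p (X × Y)) :
    z - TX X Y p (QX X Y p z) = (WithLp.equiv p (X × Y)).symm (0, z.snd) := by
  apply (WithLp.equiv p (X × Y)).injective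
  rw [show ∀ a b : WithLp p (X × Y), WithLp.equiv p (X × Y) (a - b) = WithLp.equiv p (X × Y) a - WithLp.equiv p (X × Y) b from fun _ _ => rfl]
  simp only [TX_apply, QX_apply, Equiv.apply_symm_apply]
  exact Prod.ext (sub_self _) (sub_zero _)

lemma sub_TQY (z : WithLp p (X × Y)) :
    z - TY X Y p (QY X Y p z) = (WithLp.equiv p (X × Y)).symm (z.fst, 0) := by
  apply (WithLp.equiv p (X × Y)).injective
  rw [show ∀ a b : WithLp p (X × Y), WithLp.equiv p (X × Y) (a - b) = WithLp.equiv p (X × Y) a - WithLp.equiv p (X × Y) b from fun _ _ => rfl]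
  simp only [TY_apply, QY_apply, Equiv.apply_symm_apply]
  exact Prod.ext (sub_zero _) (sub_self _)

end helpers

section helpers2
variable (X Y : Type*) [NormedAddCommGroup X] [NormedSpace ℝ X]
  [NormedAddCommGroup Y] [NormedSpace ℝ Y] (p : ℝ≥0∞) [Fact (1 ≤ p)]

lemma my_snd_norm_le' (z : WithLp p (X × Y)) : ‖z.snd‖ ≤ ‖z‖ := by
  rcases eq_or_ne p ∞ with rfl | hp
  · rw [WithLp.prod_norm_eq_sup]; exact le_sup_right
  · have hpt : 0 < p.toReal := p.toReal_pos_iff_ne_top.mpr hp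
    rw [WithLp.prod_norm_eq_add hpt]
    calc ‖z.snd‖ = (‖z.snd‖ ^ p.toReal) ^ (1 / p.toReal) := by
          rw [← Real.rpow_mul (norm_nonneg _), mul_one_div_cancel hpt.ne', Real.rpow_one]
    _ ≤ _ := by
          apply Real.rpow_le_rpow (by positivity) _ (by positivity)
          exact le_add_of_nonneg_left (by positivity)

lemma my_pair_norm_le' (x : X) (y : Y) (hx : ‖x‖ ≤ 1) (hy : ‖y‖ ≤ 1) :
    ‖(WithLp.equiv p (X × Y)).symm (x, y)‖ ≤
      1 + (if p = ∞ then 0 else ‖y‖ ^ p.toReal) := by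
  rcases eq_or_ne p ∞ with rfl | hp
  · rw [if_pos rfl, add_zero, WithLp.prod_norm_eq_sup]
    exact sup_le hx hy
  · have hpt : 0 < p.toReal := p.toReal_pos_iff_ne_top.mpr hp
    rw [if_neg hp, WithLp.prod_norm_eq_add hpt]
    have h1 : ‖((WithLp.equiv p (X × Y)).symm (x, y)).fst‖ = ‖x‖ := rfl
    have h2 : ‖((WithLp.equiv p (X × Y)).symm (x, y)).snd‖ = ‖y‖ := rfl
    rw [h1, h2]
    have hx' : ‖x‖ ^ p.toReal ≤ 1 := Real.rpow_le_one (norm_nonneg _) hx hpt.le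
    have step1 : (‖x‖ ^ p.toReal + ‖y‖ ^ p.toReal) ^ (1 / p.toReal)
        ≤ (1 + ‖y‖ ^ p.toReal) ^ (1 / p.toReal) :=
      Real.rpow_le_rpow (by positivity) (by linarith) (by positivity)
    refine step1.trans ?_
    have hb : (1:ℝ) ≤ 1 + ‖y‖ ^ p.toReal := le_add_of_nonneg_right (by positivity)
    calc (1 + ‖y‖ ^ p.toReal) ^ (1 / p.toReal) ≤ (1 + ‖y‖ ^ p.toReal) ^ (1:ℝ) := by
          apply Real.rpow_le_rpow_of_exponent_le hb
          rw [div_le_one hpt, ← ENNReal.toReal_one]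
          exact ENNReal.toReal_mono hp Fact.out
    _ = _ := Real.rpow_one _

lemma exists_good (hp : 1 < p) {δ : ℝ} (hδ : 0 < δ) :
    ∃ s α : ℝ, 0 < s ∧ s ≤ 1 ∧ 0 < α ∧
      (if p = ∞ then 0 else s ^ p.toReal) + α ≤ δ * s := by
  rcases eq_or_ne p ∞ with rfl | hptop
  · exact ⟨1, δ/2, one_pos, le_rfl, by positivity, by rw [if_pos rfl]; linarith⟩
  · have hpt1 : 1 < p.toReal := by
      rw [← ENNReal.toReal_one]
      exact (ENNReal.toReal_lt_toReal (by simp) hptop).mpr hp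
    set pt := p.toReal with hpt
    set s := min 1 ((δ/2) ^ (1/(pt-1)) : ℝ) with hs
    have hs0 : 0 < s := lt_min one_pos (Real.rpow_pos_of_pos (by linarith) _)
    refine ⟨s, s * (δ/2), hs0, min_le_left _ _, by positivity, ?_⟩
    rw [if_neg hptop]
    have h1 : s ^ pt = s ^ (pt - 1) * s := by
      rw [show pt = (pt - 1) + 1 by ring, Real.rpow_add hs0, Real.rpow_one]
      ring_nf
    have h2 : s ^ (pt - 1) ≤ δ/2 := by
      have hsle : s ≤ (δ/2) ^ (1/(pt-1)) := min_le_right _ _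
      calc s ^ (pt-1) ≤ ((δ/2) ^ (1/(pt-1))) ^ (pt-1) :=
            Real.rpow_le_rpow hs0.le hsle (by linarith)
      _ = δ/2 := by
          rw [← Real.rpow_mul (by linarith), one_div,
            inv_mul_cancel₀ (by linarith), Real.rpow_one]
    rw [h1]
    nlinarith

lemma small_fst (hp : 1 < p) {δ : ℝ} (hδ : 0 < δ) (e : X) (he : ‖e‖ = 1) :
    ∃ α > (0:ℝ), ∀ G : WithLp p (X × Y) →L[ℝ] ℝ, ‖G‖ ≤ 1 →
      1 - α < G (TX X Y p e) → ‖G - (G.comp (TX X Y p)).comp (QX X Y p)‖ ≤ δ := by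
  obtain ⟨s, α, hs0, hs1, hα0, hineq⟩ := exists_good p hp hδ
  refine ⟨α, hα0, fun G hG hGe => ?_⟩
  rw [TX_apply] at hGe
  have hY : ∀ y : Y, ‖G ((WithLp.equiv p (X × Y)).symm (0, y))‖ ≤ δ * ‖y‖ := by
    intro y
    rcases eq_or_ne y 0 with rfl | hy
    · simp; rw [show WithLp.toLp p ((0:X),(0:Y)) = 0 from rfl, map_zero]
    have hy0 : 0 < ‖y‖ := norm_pos_iff.mpr hy
    have hval : ∀ v : Y, ‖v‖ = s →
        G ((WithLp.equiv p (X × Y)).symm (0, v)) ≤ (if p = ∞ then 0 else s ^ p.toReal) + α := by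
      intro v hv
      have hsplit : (WithLp.equiv p (X × Y)).symm (e, v)
          = (WithLp.equiv p (X × Y)).symm (e, 0) + (WithLp.equiv p (X × Y)).symm (0, v) := by
        rw [← show ∀ a b : X × Y, (WithLp.equiv p (X × Y)).symm (a + b) = (WithLp.equiv p (X × Y)).symm a + (WithLp.equiv p (X × Y)).symm b from fun _ _ => rfl]
        norm_num
      have hb : G ((WithLp.equiv p (X × Y)).symm (e, v))
          ≤ 1 + (if p = ∞ then 0 else s ^ p.toReal) := by
        have h1 : ‖G ((WithLp.equiv p (X × Y)).symm (e, v))‖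
            ≤ 1 * ‖(WithLp.equiv p (X × Y)).symm (e, v)‖ :=
          le_trans (G.le_opNorm _) (mul_le_mul_of_nonneg_right hG (norm_nonneg _))
        rw [one_mul] at h1
        have h2 := my_pair_norm_le' X Y p e v (le_of_eq he) (hv ▸ hs1)
        rw [hv] at h2
        calc G ((WithLp.equiv p (X × Y)).symm (e, v))
            ≤ ‖G ((WithLp.equiv p (X × Y)).symm (e, v))‖ := le_abs_self _
        _ ≤ _ := h1.trans h2
      have hadd : G ((WithLp.equiv p (X × Y)).symm (e, v))
          = G ((WithLp.equiv p (X × Y)).symm (e, 0))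
            + G ((WithLp.equiv p (X × Y)).symm (0, v)) := by
        rw [hsplit, map_add]
      linarith
    set u : Y := (s / ‖y‖) • y with hu'
    have hu : ‖u‖ = s := by
      rw [hu', norm_smul, Real.norm_eq_abs, abs_of_pos (by positivity)]
      field_simp
    have h1 := hval u hu
    have h2 := hval (-u) (by rw [norm_neg]; exact hu)
    have hneg : (WithLp.equiv p (X × Y)).symm ((0 : X), -u)
        = -((WithLp.equiv p (X × Y)).symm (0, u)) := by
      rw [← show ∀ a : X × Y, (WithLp.equiv p (X × Y)).symm (-a) = -(WithLp.equiv p (X × Y)).symm a from fun _ => rfl]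
      norm_num
    rw [hneg, map_neg] at h2
    have habs : ‖G ((WithLp.equiv p (X × Y)).symm (0, u))‖
        ≤ (if p = ∞ then 0 else s ^ p.toReal) + α := abs_le.mpr ⟨by linarith, h1⟩
    have hyu : (WithLp.equiv p (X × Y)).symm ((0 : X), y)
        = (‖y‖ / s) • (WithLp.equiv p (X × Y)).symm (0, u) := by
      rw [← show ∀ (c : ℝ) (a : X × Y), (WithLp.equiv p (X × Y)).symm (c • a) = c • (WithLp.equiv p (X × Y)).symm a from fun _ _ => rfl]
      congr 1
      rw [Prod.smul_mk, smul_zero, hu', smul_smul]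
      congr 1
      rw [div_mul_div_comm, mul_comm, div_self (by positivity)]
      rw [one_smul]
    rw [hyu, map_smul, smul_eq_mul]
    rw [Real.norm_eq_abs, abs_mul, abs_of_pos (by positivity)]
    calc ‖y‖ / s * |G ((WithLp.equiv p (X × Y)).symm (0, u))|
        ≤ ‖y‖ / s * ((if p = ∞ then 0 else s ^ p.toReal) + α) := by
          apply mul_le_mul_of_nonneg_left habs (by positivity)
    _ ≤ ‖y‖ / s * (δ * s) := mul_le_mul_of_nonneg_left hineq (by positivity)
    _ = δ * ‖y‖ := by field_simp
  apply ContinuousLinearMap.opNorm_le_bound _ hδ.le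
  intro z
  have heq : (G - (G.comp (TX X Y p)).comp (QX X Y p)) z
      = G (z - TX X Y p (QX X Y p z)) := by simp [map_sub]
  rw [heq, sub_TQX]
  exact (hY z.snd).trans (mul_le_mul_of_nonneg_left (my_snd_norm_le' X Y p z) hδ.le)

end helpers2

section helpers3
variable (X Y : Type*) [NormedAddCommGroup X] [NormedSpace ℝ X]
  [NormedAddCommGroup Y] [NormedSpace ℝ Y] (p : ℝ≥0∞) [Fact (1 ≤ p)]

lemma my_fst_norm_le' (z : WithLp p (X × Y)) : ‖z.fst‖ ≤ ‖z‖ := by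
  rcases eq_or_ne p ∞ with rfl | hp
  · rw [WithLp.prod_norm_eq_sup]; exact le_sup_left
  · have hpt : 0 < p.toReal := p.toReal_pos_iff_ne_top.mpr hp
    rw [WithLp.prod_norm_eq_add hpt]
    calc ‖z.fst‖ = (‖z.fst‖ ^ p.toReal) ^ (1 / p.toReal) := by
          rw [← Real.rpow_mul (norm_nonneg _), mul_one_div_cancel hpt.ne', Real.rpow_one]
    _ ≤ _ := by
          apply Real.rpow_le_rpow (by positivity) _ (by positivity)
          exact le_add_of_nonneg_right (by positivity)

lemma my_pair_norm_le'' (x : X) (y : Y) (hx : ‖x‖ ≤ 1) (hy : ‖y‖ ≤ 1) :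
    ‖(WithLp.equiv p (X × Y)).symm (x, y)‖ ≤
      1 + (if p = ∞ then 0 else ‖x‖ ^ p.toReal) := by
  rcases eq_or_ne p ∞ with rfl | hp
  · rw [if_pos rfl, add_zero, WithLp.prod_norm_eq_sup]
    exact sup_le hx hy
  · have hpt : 0 < p.toReal := p.toReal_pos_iff_ne_top.mpr hp
    rw [if_neg hp, WithLp.prod_norm_eq_add hpt]
    have h1 : ‖((WithLp.equiv p (X × Y)).symm (x, y)).fst‖ = ‖x‖ := rfl
    have h2 : ‖((WithLp.equiv p (X × Y)).symm (x, y)).snd‖ = ‖y‖ := rfl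
    rw [h1, h2]
    have hy' : ‖y‖ ^ p.toReal ≤ 1 := Real.rpow_le_one (norm_nonneg _) hy hpt.le
    have step1 : (‖x‖ ^ p.toReal + ‖y‖ ^ p.toReal) ^ (1 / p.toReal)
        ≤ (1 + ‖x‖ ^ p.toReal) ^ (1 / p.toReal) :=
      Real.rpow_le_rpow (by positivity) (by linarith) (by positivity)
    refine step1.trans ?_
    have hb : (1:ℝ) ≤ 1 + ‖x‖ ^ p.toReal := le_add_of_nonneg_right (by positivity)
    calc (1 + ‖x‖ ^ p.toReal) ^ (1 / p.toReal) ≤ (1 + ‖x‖ ^ p.toReal) ^ (1:ℝ) := by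
          apply Real.rpow_le_rpow_of_exponent_le hb
          rw [div_le_one hpt, ← ENNReal.toReal_one]
          exact ENNReal.toReal_mono hp Fact.out
    _ = _ := Real.rpow_one _

lemma small_snd (hp : 1 < p) {δ : ℝ} (hδ : 0 < δ) (e : Y) (he : ‖e‖ = 1) :
    ∃ α > (0:ℝ), ∀ G : WithLp p (X × Y) →L[ℝ] ℝ, ‖G‖ ≤ 1 →
      1 - α < G (TY X Y p e) → ‖G - (G.comp (TY X Y p)).comp (QY X Y p)‖ ≤ δ := by
  obtain ⟨s, α, hs0, hs1, hα0, hineq⟩ := exists_good p hp hδ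
  refine ⟨α, hα0, fun G hG hGe => ?_⟩
  rw [TY_apply] at hGe
  have hX : ∀ x : X, ‖G ((WithLp.equiv p (X × Y)).symm (x, 0))‖ ≤ δ * ‖x‖ := by
    intro x
    rcases eq_or_ne x 0 with rfl | hx
    · simp; rw [show WithLp.toLp p ((0:X),(0:Y)) = 0 from rfl, map_zero]
    have hx0 : 0 < ‖x‖ := norm_pos_iff.mpr hx
    have hval : ∀ v : X, ‖v‖ = s →
        G ((WithLp.equiv p (X × Y)).symm (v, 0)) ≤ (if p = ∞ then 0 else s ^ p.toReal) + α := by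
      intro v hv
      have hsplit : (WithLp.equiv p (X × Y)).symm (v, e)
          = (WithLp.equiv p (X × Y)).symm (0, e) + (WithLp.equiv p (X × Y)).symm (v, 0) := by
        rw [← show ∀ a b : X × Y, (WithLp.equiv p (X × Y)).symm (a + b) = (WithLp.equiv p (X × Y)).symm a + (WithLp.equiv p (X × Y)).symm b from fun _ _ => rfl]
        norm_num
      have hb : G ((WithLp.equiv p (X × Y)).symm (v, e))
          ≤ 1 + (if p = ∞ then 0 else s ^ p.toReal) := by
        have h1 : ‖G ((WithLp.equiv p (X × Y)).symm (v, e))‖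
            ≤ 1 * ‖(WithLp.equiv p (X × Y)).symm (v, e)‖ :=
          le_trans (G.le_opNorm _) (mul_le_mul_of_nonneg_right hG (norm_nonneg _))
        rw [one_mul] at h1
        have h2 := my_pair_norm_le'' X Y p v e (hv ▸ hs1) (le_of_eq he)
        rw [hv] at h2
        calc G ((WithLp.equiv p (X × Y)).symm (v, e))
            ≤ ‖G ((WithLp.equiv p (X × Y)).symm (v, e))‖ := le_abs_self _
        _ ≤ _ := h1.trans h2
      have hadd : G ((WithLp.equiv p (X × Y)).symm (v, e))
          = G ((WithLp.equiv p (X × Y)).symm (0, e))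
            + G ((WithLp.equiv p (X × Y)).symm (v, 0)) := by
        rw [hsplit, map_add]
      linarith
    set u : X := (s / ‖x‖) • x with hu'
    have hu : ‖u‖ = s := by
      rw [hu', norm_smul, Real.norm_eq_abs, abs_of_pos (by positivity)]
      field_simp
    have h1 := hval u hu
    have h2 := hval (-u) (by rw [norm_neg]; exact hu)
    have hneg : (WithLp.equiv p (X × Y)).symm (-u, (0 : Y))
        = -((WithLp.equiv p (X × Y)).symm (u, 0)) := by
      rw [← show ∀ a : X × Y, (WithLp.equiv p (X × Y)).symm (-a) = -(WithLp.equiv p (X × Y)).symm a from fun _ => rfl]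
      norm_num
    rw [hneg, map_neg] at h2
    have habs : ‖G ((WithLp.equiv p (X × Y)).symm (u, 0))‖
        ≤ (if p = ∞ then 0 else s ^ p.toReal) + α := abs_le.mpr ⟨by linarith, h1⟩
    have hyu : (WithLp.equiv p (X × Y)).symm (x, (0 : Y))
        = (‖x‖ / s) • (WithLp.equiv p (X × Y)).symm (u, 0) := by
      rw [← show ∀ (c : ℝ) (a : X × Y), (WithLp.equiv p (X × Y)).symm (c • a) = c • (WithLp.equiv p (X × Y)).symm a from fun _ _ => rfl]
      congr 1
      rw [Prod.smul_mk, smul_zero, hu', smul_smul]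
      congr 1
      rw [div_mul_div_comm, mul_comm, div_self (by positivity)]
      rw [one_smul]
    rw [hyu, map_smul, smul_eq_mul]
    rw [Real.norm_eq_abs, abs_mul, abs_of_pos (by positivity)]
    calc ‖x‖ / s * |G ((WithLp.equiv p (X × Y)).symm (u, 0))|
        ≤ ‖x‖ / s * ((if p = ∞ then 0 else s ^ p.toReal) + α) := by
          apply mul_le_mul_of_nonneg_left habs (by positivity)
    _ ≤ ‖x‖ / s * (δ * s) := mul_le_mul_of_nonneg_left hineq (by positivity)
    _ = δ * ‖x‖ := by field_simp
  apply ContinuousLinearMap.opNorm_le_bound _ hδ.le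
  intro z
  have heq : (G - (G.comp (TY X Y p)).comp (QY X Y p)) z
      = G (z - TY X Y p (QY X Y p z)) := by simp [map_sub]
  rw [heq, sub_TQY]
  exact (hX z.fst).trans (mul_le_mul_of_nonneg_left (my_fst_norm_le' X Y p z) hδ.le)

end helpers3

lemma norm_smul_clm {Z : Type*} [NormedAddCommGroup Z] [NormedSpace ℝ Z] (r : ℝ)
    (f : Z →L[ℝ] ℝ) : ‖r • f‖ = |r| * ‖f‖ := by
  have := norm_smul (α := ℝ) (β := Z →L[ℝ] ℝ) r f
  rw [this, Real.norm_eq_abs]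

lemma abstract_key {E Z : Type*} [NormedAddCommGroup E] [NormedSpace ℝ E]
    [NormedAddCommGroup Z] [NormedSpace ℝ Z]
    (T : E →L[ℝ] Z) (Q : Z →L[ℝ] E)
    (hT : ∀ x, ‖T x‖ = ‖x‖) (hQ : ∀ z, ‖Q z‖ ≤ ‖z‖)
    (hsmall : ∀ δ > (0:ℝ), ∀ e : E, ‖e‖ = 1 → ∃ α > (0:ℝ), ∀ G : Z →L[ℝ] ℝ,
      ‖G‖ ≤ 1 → 1 - α < G (T e) → ‖G - (G.comp T).comp Q‖ ≤ δ)
    (hE : wstarBSCSP E) : wstarBSCSP Z := by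
  intro ε hε
  obtain ⟨n, e, α, lam, he, hα, hlam, hsum, hdiam⟩ := hE (ε/2) (by linarith)
  choose α' hα'pos hα' using fun i => hsmall (ε/8) (by linarith) (e i) (he i)
  set β : Fin n → ℝ := fun i => min (α i) (α' i) with hβ
  refine ⟨n, fun i => T (e i), β, lam, fun i => by rw [hT]; exact he i,
    fun i => lt_min (hα i) (hα'pos i), hlam, hsum, ?_⟩
  have hRnorm : ∀ G : Z →L[ℝ] ℝ, ‖G.comp T‖ ≤ ‖G‖ := fun G =>
    ContinuousLinearMap.opNorm_le_bound _ (norm_nonneg G) fun x => by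
      calc ‖G (T x)‖ ≤ ‖G‖ * ‖T x‖ := G.le_opNorm _
      _ = ‖G‖ * ‖x‖ := by rw [hT]
  set sumE := ∑ i, lam i • wstarSlice E (e i) (α i) with hsumE
  -- sumE is bounded
  have hEball : sumE ⊆ closedBall 0 1 := by
    intro b hb
    rw [hsumE, Set.mem_fintype_sum] at hb
    obtain ⟨g, hg, rfl⟩ := hb
    rw [mem_closedBall_zero_iff]
    calc ‖∑ i, g i‖ ≤ ∑ i, ‖g i‖ := norm_sum_le _ _
    _ ≤ ∑ i, lam i := by
        apply Finset.sum_le_sum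
        intro i _
        obtain ⟨c, hc, hceq⟩ := hg i
        rw [← hceq]
        rw [norm_smul_clm, abs_of_nonneg (hlam i)]
        have : ‖c‖ ≤ 1 := mem_closedBall_zero_iff.mp hc.1
        nlinarith [hlam i]
    _ = 1 := hsum
  have hEbdd : Bornology.IsBounded sumE := (isBounded_closedBall).subset hEball
  -- main estimate
  have key : ∀ A ∈ ∑ i, lam i • wstarSlice Z (T (e i)) (β i),
      ∀ B ∈ ∑ i, lam i • wstarSlice Z (T (e i)) (β i), dist A B ≤ ε/8 + ε/2 + ε/8 := by
    intro A hA B hB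
    rw [Set.mem_fintype_sum] at hA hB
    obtain ⟨a, ha, rfl⟩ := hA
    obtain ⟨b, hb, rfl⟩ := hB
    choose GA hGA hGAeq using fun i => (Set.mem_smul_set.mp (ha i))
    choose GB hGB hGBeq using fun i => (Set.mem_smul_set.mp (hb i))
    have hGAn : ∀ i, ‖GA i‖ ≤ 1 := fun i => mem_closedBall_zero_iff.mp (hGA i).1
    have hGBn : ∀ i, ‖GB i‖ ≤ 1 := fun i => mem_closedBall_zero_iff.mp (hGB i).1
    set A := ∑ i, a i with hA'
    set B := ∑ i, b i with hB'
    have hAeq : A = ∑ i, lam i • GA i := by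
      rw [hA']; exact Finset.sum_congr rfl fun i _ => (hGAeq i).symm
    have hBeq : B = ∑ i, lam i • GB i := by
      rw [hB']; exact Finset.sum_congr rfl fun i _ => (hGBeq i).symm
    -- restrictions in E-slices
    have hmemA : (A.comp T : E →L[ℝ] ℝ) ∈ sumE := by
      rw [hsumE]
      have : (A.comp T : E →L[ℝ] ℝ) = ∑ i, lam i • ((GA i).comp T) := by
        ext x
        simp [hAeq, ContinuousLinearMap.sum_apply]
      rw [this]
      apply Set.finset_sum_mem_finset_sum
      intro i _
      apply Set.smul_mem_smul_set
      refine ⟨mem_closedBall_zero_iff.mpr ((hRnorm _).trans (hGAn i)), ?_⟩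
      have h1 : 1 - β i < GA i (T (e i)) := (hGA i).2
      have : β i ≤ α i := min_le_left _ _
      simpa using lt_of_le_of_lt (by linarith) h1
    have hmemB : (B.comp T : E →L[ℝ] ℝ) ∈ sumE := by
      rw [hsumE]
      have : (B.comp T : E →L[ℝ] ℝ) = ∑ i, lam i • ((GB i).comp T) := by
        ext x
        simp [hBeq, ContinuousLinearMap.sum_apply]
      rw [this]
      apply Set.finset_sum_mem_finset_sum
      intro i _
      apply Set.smul_mem_smul_set
      refine ⟨mem_closedBall_zero_iff.mpr ((hRnorm _).trans (hGBn i)), ?_⟩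
      have h1 : 1 - β i < GB i (T (e i)) := (hGB i).2
      have : β i ≤ α i := min_le_left _ _
      simpa using lt_of_le_of_lt (by linarith) h1
    -- small pieces
    have hsmallA : ‖A - (A.comp T).comp Q‖ ≤ ε/8 := by
      have heq : A - (A.comp T).comp Q = ∑ i, lam i • (GA i - ((GA i).comp T).comp Q) := by
        ext z
        simp [hAeq, ContinuousLinearMap.sum_apply, Finset.sum_sub_distrib, smul_sub]
      rw [heq]
      calc ‖∑ i, lam i • (GA i - ((GA i).comp T).comp Q)‖
          ≤ ∑ i, ‖lam i • (GA i - ((GA i).comp T).comp Q)‖ := norm_sum_le _ _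
      _ ≤ ∑ i, lam i * (ε/8) := by
          apply Finset.sum_le_sum
          intro i _
          rw [norm_smul_clm, abs_of_nonneg (hlam i)]
          have hv : 1 - α' i < GA i (T (e i)) := by
            have h1 : 1 - β i < GA i (T (e i)) := (hGA i).2
            have : β i ≤ α' i := min_le_right _ _
            linarith
          exact mul_le_mul_of_nonneg_left (hα' i _ (hGAn i) hv) (hlam i)
      _ = ε/8 := by rw [← Finset.sum_mul, hsum, one_mul]
    have hsmallB : ‖B - (B.comp T).comp Q‖ ≤ ε/8 := by
      have heq : B - (B.comp T).comp Q = ∑ i, lam i • (GB i - ((GB i).comp T).comp Q) := by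
        ext z
        simp [hBeq, ContinuousLinearMap.sum_apply, Finset.sum_sub_distrib, smul_sub]
      rw [heq]
      calc ‖∑ i, lam i • (GB i - ((GB i).comp T).comp Q)‖
          ≤ ∑ i, ‖lam i • (GB i - ((GB i).comp T).comp Q)‖ := norm_sum_le _ _
      _ ≤ ∑ i, lam i * (ε/8) := by
          apply Finset.sum_le_sum
          intro i _
          rw [norm_smul_clm, abs_of_nonneg (hlam i)]
          have hv : 1 - α' i < GB i (T (e i)) := by
            have h1 : 1 - β i < GB i (T (e i)) := (hGB i).2
            have : β i ≤ α' i := min_le_right _ _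
            linarith
          exact mul_le_mul_of_nonneg_left (hα' i _ (hGBn i) hv) (hlam i)
      _ = ε/8 := by rw [← Finset.sum_mul, hsum, one_mul]
    -- middle piece
    have hmid : ‖(A.comp T).comp Q - (B.comp T).comp Q‖ ≤ ε/2 := by
      have h1 : ‖(A.comp T).comp Q - (B.comp T).comp Q‖ ≤ ‖A.comp T - B.comp T‖ := by
        apply ContinuousLinearMap.opNorm_le_bound _ (norm_nonneg _)
        intro z
        have : ((A.comp T).comp Q - (B.comp T).comp Q) z = (A.comp T - B.comp T) (Q z) := by
          simp
        rw [this]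
        calc ‖(A.comp T - B.comp T) (Q z)‖ ≤ ‖A.comp T - B.comp T‖ * ‖Q z‖ :=
              ContinuousLinearMap.le_opNorm _ _
        _ ≤ ‖A.comp T - B.comp T‖ * ‖z‖ :=
              mul_le_mul_of_nonneg_left (hQ z) (norm_nonneg _)
      have h2 : ‖A.comp T - B.comp T‖ ≤ ε/2 := by
        have := dist_le_diam_of_mem hEbdd hmemA hmemB
        rw [dist_eq_norm] at this
        exact this.trans (le_of_lt (by rw [hsumE] at *; exact hdiam))
      linarith
    have hdecomp : A - B = (A - (A.comp T).comp Q) + ((A.comp T).comp Q - (B.comp T).comp Q)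
          + ((B.comp T).comp Q - B) := by abel
    calc dist A B = ‖A - B‖ := dist_eq_norm _ _
    _ = ‖(A - (A.comp T).comp Q) + ((A.comp T).comp Q - (B.comp T).comp Q)
          + ((B.comp T).comp Q - B)‖ := by rw [hdecomp]
    _ ≤ ‖A - (A.comp T).comp Q‖ + ‖(A.comp T).comp Q - (B.comp T).comp Q‖
          + ‖(B.comp T).comp Q - B‖ := norm_add₃_le
    _ ≤ ε/8 + ε/2 + ε/8 := by
        have := hsmallB
        rw [norm_sub_rev] at this
        gcongr
  calc diam (∑ i, lam i • wstarSlice Z (T (e i)) (β i)) ≤ ε/8 + ε/2 + ε/8 :=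
        diam_le_of_forall_dist_le (by linarith) key
  _ < ε := by linarith

/-- For `Z = X ⊕_p Y` (`1 < p ≤ ∞`), if `X*` or `Y*` has `w*-BSCSP` then `Z*` has
`w*-BSCSP`. -/
theorem statement14 (X Y : Type*) [NormedAddCommGroup X] [NormedSpace ℝ X] [CompleteSpace X]
    [NormedAddCommGroup Y] [NormedSpace ℝ Y] [CompleteSpace Y]
    (p : ℝ≥0∞) [Fact (1 ≤ p)] (hp : 1 < p) (h : wstarBSCSP X ∨ wstarBSCSP Y) :
    wstarBSCSP (WithLp p (X × Y)) := by
  rcases h with hX | hY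
  · exact abstract_key (TX X Y p) (QX X Y p) (TX_norm X Y p)
      (fun z => my_fst_norm_le' X Y p z)
      (fun δ hδ e he => small_fst X Y p hp hδ e he) hX
  · exact abstract_key (TY X Y p) (QY X Y p) (TY_norm X Y p)
      (fun z => my_snd_norm_le' X Y p z)
      (fun δ hδ e he => small_snd X Y p hp hδ e he) hY
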